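/- arXiv:0911.5473 — 4 statements merged into one kernel-verified Lean document; each statement's English description precedes it below -/
import Mathlib

section
/- Under the same assumptions (X admits an exponential φ-coupling with constants C_φ, β, invariant measure π, φ ∈ L_1(π)), for every p ∈ (1,∞) and every f ∈ L_{p,φ} with ∫ f dπ = 0, one has ‖T_t f‖_{p,φ}^p ≤ 2^p C_φ^{p/q} e^{-βpt/q} ‖f‖_{p,φ}^p for all t ≥ 0. In particular β/q = β - β/p is a growth bound for the restriction of {T_t} to the subspace L_{p,φ}^0 of mean-zero elements of L_{p,φ}. -/
open MeasureTheory Filter Set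

open scoped ENNReal NNReal

section AuxExpPhiCoupling
variable {𝕏 : Type*} [MeasurableSpace 𝕏]

/-- Invariance inequality for simple functions, lower Lebesgue integral. -/
lemma aux_simple (P : 𝕏 → Measure 𝕏) (π : Measure 𝕏)
    (hinv : ∀ A : Set 𝕏, MeasurableSet A → ∫⁻ x, P x A ∂π = π A)
    (s : SimpleFunc 𝕏 ℝ≥0∞) :
    ∫⁻ y, s y ∂π ≤ ∫⁻ x, ∫⁻ y, s y ∂(P x) ∂π := by
  induction s using SimpleFunc.induction with
  | const c hs =>
    rename_i A
    simp only [SimpleFunc.coe_piecewise, SimpleFunc.coe_const, SimpleFunc.coe_zero,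
      Set.piecewise_eq_indicator, Function.const]
    calc ∫⁻ y, A.indicator (fun _ => c) y ∂π = c * π A := lintegral_indicator_const hs c
    _ = c * ∫⁻ x, P x A ∂π := by rw [hinv A hs]
    _ ≤ ∫⁻ x, c * P x A ∂π := lintegral_const_mul_le c _
    _ = ∫⁻ x, ∫⁻ y, A.indicator (fun _ => c) y ∂(P x) ∂π := by
        refine lintegral_congr fun x => ?_
        rw [lintegral_indicator_const hs c]
  | @add f g hdisj hf hg =>
    simp only [SimpleFunc.coe_add, Pi.add_apply]
    calc ∫⁻ y, f y + g y ∂π = ∫⁻ y, f y ∂π + ∫⁻ y, g y ∂π :=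
        lintegral_add_left f.measurable _
    _ ≤ (∫⁻ x, ∫⁻ y, f y ∂(P x) ∂π) + ∫⁻ x, ∫⁻ y, g y ∂(P x) ∂π := add_le_add hf hg
    _ ≤ ∫⁻ x, (∫⁻ y, f y ∂(P x)) + ∫⁻ y, g y ∂(P x) ∂π := le_lintegral_add _ _
    _ = ∫⁻ x, ∫⁻ y, f y + g y ∂(P x) ∂π := by
        refine lintegral_congr fun x => (lintegral_add_left f.measurable _).symm

/-- Invariance inequality for measurable functions, lower Lebesgue integral. -/
lemma aux_meas (P : 𝕏 → Measure 𝕏) (π : Measure 𝕏)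
    (hinv : ∀ A : Set 𝕏, MeasurableSet A → ∫⁻ x, P x A ∂π = π A)
    {w : 𝕏 → ℝ≥0∞} (hw : Measurable w) :
    ∫⁻ y, w y ∂π ≤ ∫⁻ x, ∫⁻ y, w y ∂(P x) ∂π := by
  rw [lintegral_eq_iSup_eapprox_lintegral hw]
  refine iSup_le fun n => ?_
  calc (SimpleFunc.eapprox w n).lintegral π = ∫⁻ y, (SimpleFunc.eapprox w n) y ∂π :=
      (SimpleFunc.lintegral_eq_lintegral _ _).symm
  _ ≤ ∫⁻ x, ∫⁻ y, (SimpleFunc.eapprox w n) y ∂(P x) ∂π := aux_simple P π hinv _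
  _ ≤ ∫⁻ x, ∫⁻ y, w y ∂(P x) ∂π := by
      refine lintegral_mono fun x => lintegral_mono fun y => ?_
      exact (le_iSup (fun n => (SimpleFunc.eapprox w n) y) n).trans (SimpleFunc.iSup_eapprox_apply hw y).le

/-- A measurable majorant of `x ↦ ∫⁻ g ∂(P x)` with almost the right integral, bounded case. -/
lemma aux_majorant_bounded (P : 𝕏 → Measure 𝕏) [∀ x, IsProbabilityMeasure (P x)]
    (π : Measure 𝕏) [IsProbabilityMeasure π]
    (hinv : ∀ A : Set 𝕏, MeasurableSet A → ∫⁻ x, P x A ∂π = π A)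
    {g : 𝕏 → ℝ≥0∞} (hg : Measurable g) {C : ℝ≥0∞} (hC : C ≠ ∞) (hgC : ∀ y, g y ≤ C)
    {ε : ℝ≥0∞} (hε : 0 < ε) :
    ∃ Φ : 𝕏 → ℝ≥0∞, Measurable Φ ∧ (∀ x, ∫⁻ y, g y ∂(P x) ≤ Φ x) ∧
      ∫⁻ x, Φ x ∂π ≤ (∫⁻ y, g y ∂π) + ε := by
  have hgπ : ∫⁻ y, g y ∂π ≤ C := by
    calc ∫⁻ y, g y ∂π ≤ ∫⁻ _, C ∂π := lintegral_mono hgC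
    _ = C := by simp
  set G : 𝕏 → ℝ≥0∞ := fun x => ∫⁻ y, C - g y ∂(P x) with hG
  have hGle : ∀ x, G x ≤ C := fun x => by
    calc G x ≤ ∫⁻ _, C ∂(P x) := lintegral_mono fun y => tsub_le_self
    _ = C := by simp
  have hFG : ∀ x, (∫⁻ y, g y ∂(P x)) = C - G x := by
    intro x
    refine ENNReal.eq_sub_of_add_eq (lt_of_le_of_lt (hGle x) hC.lt_top).ne ?_
    rw [← lintegral_add_left hg]
    calc ∫⁻ y, g y + (C - g y) ∂(P x) = ∫⁻ _, C ∂(P x) :=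
        lintegral_congr fun y => add_tsub_cancel_of_le (hgC y)
    _ = C := by simp
  have hlow : C - ∫⁻ y, g y ∂π ≤ ∫⁻ x, G x ∂π := by
    have h1 : ∫⁻ y, C - g y ∂π ≤ ∫⁻ x, G x ∂π := aux_meas P π hinv (measurable_const.sub hg)
    have h2 : ∫⁻ y, C - g y ∂π = C - ∫⁻ y, g y ∂π := by
      rw [lintegral_sub hg (lt_of_le_of_lt hgπ hC.lt_top).ne (ae_of_all _ hgC)]
      simp
    rw [← h2]; exact h1
  have hGint : ∫⁻ x, G x ∂π ≤ C := by
    calc ∫⁻ x, G x ∂π ≤ ∫⁻ _, C ∂π := lintegral_mono hGle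
    _ = C := by simp
  -- choose a simple function w ≤ G with almost maximal integral
  obtain ⟨w, hwG, hw⟩ : ∃ w : SimpleFunc 𝕏 ℝ≥0∞, (⇑w ≤ G) ∧
      (∫⁻ x, G x ∂π) ≤ w.lintegral π + ε := by
    by_cases h0 : ∫⁻ x, G x ∂π ≤ ε
    · exact ⟨0, fun x => zero_le, by simpa using h0⟩
    push_neg at h0
    have hlt : (∫⁻ x, G x ∂π) - ε < ∫⁻ x, G x ∂π :=
      ENNReal.sub_lt_self (lt_of_le_of_lt hGint hC.lt_top).ne (pos_of_gt h0).ne' hε.ne'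
    rw [lintegral_def] at hlt
    obtain ⟨w, hlt2⟩ := lt_iSup_iff.mp hlt
    obtain ⟨hwG, hlt3⟩ := lt_iSup_iff.mp hlt2
    refine ⟨w, hwG, ?_⟩
    rw [← lintegral_def] at hlt3
    exact ((ENNReal.sub_lt_iff_lt_right ((lt_of_lt_of_le (h0.trans_le hGint) le_top |>.ne))
      h0.le).mp hlt3).le
  -- the majorant
  refine ⟨fun x => C - w x, measurable_const.sub w.measurable, fun x => ?_, ?_⟩
  · rw [hFG x]
    exact tsub_le_tsub_left (hwG x) C
  · have hwle : ∀ x, w x ≤ C := fun x => (hwG x).trans (hGle x)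
    have hwπ : ∫⁻ x, w x ∂π ≤ C := by
      calc ∫⁻ x, w x ∂π ≤ ∫⁻ _, C ∂π := lintegral_mono hwle
      _ = C := by simp
    have hΦ : ∫⁻ x, C - w x ∂π = C - ∫⁻ x, w x ∂π := by
      rw [lintegral_sub w.measurable (lt_of_le_of_lt hwπ hC.lt_top).ne (ae_of_all _ hwle)]
      simp
    rw [hΦ, tsub_le_iff_right]
    have hwlin : w.lintegral π = ∫⁻ x, w x ∂π := (w.lintegral_eq_lintegral π).symm
    calc C = (∫⁻ y, g y ∂π) + (C - ∫⁻ y, g y ∂π) := (add_tsub_cancel_of_le hgπ).symm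
    _ ≤ (∫⁻ y, g y ∂π) + (∫⁻ x, G x ∂π) := add_le_add_right hlow _
    _ ≤ (∫⁻ y, g y ∂π) + (w.lintegral π + ε) := add_le_add_right hw _
    _ = (∫⁻ y, g y ∂π) + ε + ∫⁻ x, w x ∂π := by rw [hwlin]; ring

/-- A measurable majorant of `x ↦ ∫⁻ g ∂(P x)` with almost the right integral. -/
lemma aux_majorant (P : 𝕏 → Measure 𝕏) [∀ x, IsProbabilityMeasure (P x)]
    (π : Measure 𝕏) [IsProbabilityMeasure π]
    (hinv : ∀ A : Set 𝕏, MeasurableSet A → ∫⁻ x, P x A ∂π = π A)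
    {g : 𝕏 → ℝ≥0∞} (hg : Measurable g) (hfin : ∀ y, g y < ∞)
    {ε : ℝ≥0∞} (hε : 0 < ε) :
    ∃ Φ : 𝕏 → ℝ≥0∞, Measurable Φ ∧ (∀ x, ∫⁻ y, g y ∂(P x) ≤ Φ x) ∧
      ∫⁻ x, Φ x ∂π ≤ (∫⁻ y, g y ∂π) + ε := by
  classical
  set gk : ℕ → 𝕏 → ℝ≥0∞ := fun k y => if (k : ℝ≥0∞) ≤ g y ∧ g y < (k : ℝ≥0∞) + 1 then g y else 0
    with hgk
  have hgkmeas : ∀ k, Measurable (gk k) := by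
    intro k
    apply Measurable.ite _ hg measurable_const
    have : {y : 𝕏 | (k : ℝ≥0∞) ≤ g y ∧ g y < (k : ℝ≥0∞) + 1} = g ⁻¹' Set.Ico k ((k : ℝ≥0∞) + 1) := rfl
    rw [this]
    exact hg measurableSet_Ico
  have hgkbdd : ∀ k y, gk k y ≤ (k : ℝ≥0∞) + 1 := by
    intro k y
    simp only [hgk]
    split
    · next h => exact h.2.le
    · exact zero_le
  have hgksum : ∀ y, ∑' k, gk k y = g y := by
    intro y
    have hy : g y ≠ ∞ := (hfin y).ne
    set k0 : ℕ := ⌊(g y).toReal⌋₊ with hk0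
    have h0r : (0 : ℝ) ≤ (g y).toReal := ENNReal.toReal_nonneg
    have hmem : (k0 : ℝ≥0∞) ≤ g y ∧ g y < (k0 : ℝ≥0∞) + 1 := by
      constructor
      · rw [← ENNReal.ofReal_toReal hy, ← ENNReal.ofReal_natCast k0]
        exact ENNReal.ofReal_le_ofReal (Nat.floor_le h0r)
      · rw [← ENNReal.ofReal_toReal hy]
        have h1 : ((k0 : ℝ≥0∞) + 1) = ENNReal.ofReal ((k0 : ℝ) + 1) := by
          rw [ENNReal.ofReal_add (by positivity) zero_le_one]
          simp [ENNReal.ofReal_natCast]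
        rw [h1]
        exact ENNReal.ofReal_lt_ofReal_iff (by positivity) |>.mpr (Nat.lt_floor_add_one _)
    have : ∀ b : ℕ, b ≠ k0 → gk b y = 0 := by
      intro b hb
      simp only [hgk, ite_eq_right_iff]
      rintro ⟨h1, h2⟩
      rcases lt_or_gt_of_ne hb with h | h
      · -- b < k0 : then b+1 ≤ k0 ≤ g y contradicts g y < b+1
        exfalso
        have : ((b : ℝ≥0∞) + 1) ≤ (k0 : ℝ≥0∞) := by
          rw [← Nat.cast_one, ← Nat.cast_add]
          exact Nat.cast_le.mpr h
        exact absurd (lt_of_lt_of_le (lt_of_lt_of_le h2 this) hmem.1) (lt_irrefl _)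
      · exfalso
        have : ((k0 : ℝ≥0∞) + 1) ≤ (b : ℝ≥0∞) := by
          rw [← Nat.cast_one, ← Nat.cast_add]
          exact Nat.cast_le.mpr h
        exact absurd (lt_of_lt_of_le (lt_of_lt_of_le hmem.2 this) h1) (lt_irrefl _)
    rw [tsum_eq_single k0 this]
    simp only [hgk, if_pos hmem]
  -- majorants for each piece
  have hεk : ∀ k : ℕ, (0 : ℝ≥0∞) < ε * 2⁻¹ * 2⁻¹ ^ k := by
    intro k
    apply ENNReal.mul_pos
    · exact (ENNReal.mul_pos hε.ne' (by simp)).ne'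
    · exact (ENNReal.pow_pos (by simp) k).ne'
  choose Φk hΦkmeas hΦkmaj hΦkint using fun k : ℕ =>
    aux_majorant_bounded P π hinv (hgkmeas k)
      (by simp : ((k : ℝ≥0∞) + 1) ≠ ∞) (hgkbdd k) (hεk k)
  refine ⟨fun x => ∑' k, Φk k x, Measurable.ennreal_tsum hΦkmeas, fun x => ?_, ?_⟩
  · calc ∫⁻ y, g y ∂(P x) = ∫⁻ y, ∑' k, gk k y ∂(P x) :=
        lintegral_congr fun y => (hgksum y).symm
    _ = ∑' k, ∫⁻ y, gk k y ∂(P x) := lintegral_tsum fun k => (hgkmeas k).aemeasurable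
    _ ≤ ∑' k, Φk k x := ENNReal.tsum_le_tsum fun k => hΦkmaj k x
  · calc ∫⁻ x, ∑' k, Φk k x ∂π = ∑' k, ∫⁻ x, Φk k x ∂π :=
        lintegral_tsum fun k => (hΦkmeas k).aemeasurable
    _ ≤ ∑' k, ((∫⁻ y, gk k y ∂π) + ε * 2⁻¹ * 2⁻¹ ^ k) := ENNReal.tsum_le_tsum hΦkint
    _ = (∑' k, ∫⁻ y, gk k y ∂π) + ∑' k, ε * 2⁻¹ * 2⁻¹ ^ k := ENNReal.tsum_add
    _ = (∫⁻ y, g y ∂π) + ε := by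
        congr 1
        · rw [← lintegral_tsum fun k => (hgkmeas k).aemeasurable]
          exact lintegral_congr fun y => hgksum y
        · rw [ENNReal.tsum_mul_left, ENNReal.tsum_geometric, ENNReal.one_sub_inv_two,
            inv_inv, mul_assoc,
            ENNReal.inv_mul_cancel (two_ne_zero) (ENNReal.ofNat_ne_top), mul_one]

end AuxExpPhiCoupling

/-- `L_{p,φ}` convergence rate: for a Markov process admitting an exponential `φ`-coupling,
`‖T_t f‖_{p,φ}^p ≤ 2^p C_φ^{p/q} e^{-βpt/q} ‖f‖_{p,φ}^p` for mean-zero `f ∈ L_{p,φ}`;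
in particular `β/q` is a growth bound on `L_{p,φ}^0`. -/
theorem Lp_phi_growth_bound_of_exponential_phi_coupling
    {𝕏 : Type*} [MeasurableSpace 𝕏]
    (P : ℝ → 𝕏 → Measure 𝕏) [∀ t x, IsProbabilityMeasure (P t x)]
    (π : Measure 𝕏) [IsProbabilityMeasure π]
    (hinv : ∀ t : ℝ, 0 ≤ t → ∀ A : Set 𝕏, MeasurableSet A →
      ∫⁻ x, P t x A ∂π = π A)
    (φ : 𝕏 → ℝ) (hφmeas : Measurable φ) (hφ1 : ∀ x, 1 ≤ φ x) (hφint : Integrable φ π)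
    (Cφ β : ℝ) (hCφ : 0 < Cφ) (hβ : 0 < β)
    (Z : 𝕏 → ℝ → Measure (𝕏 × 𝕏))
    (hZ1 : ∀ x t, 0 ≤ t → (Z x t).map Prod.fst = P t x)
    (hZ2 : ∀ x t, 0 ≤ t → (Z x t).map Prod.snd = π)
    (hZcoupling : ∀ x t, 0 ≤ t →
      ∫ p in {p : 𝕏 × 𝕏 | p.1 ≠ p.2}, (φ p.1 + φ p.2) ∂(Z x t)
        ≤ Cφ * Real.exp (-β * t) * φ x)
    (p q : ℝ) (hp : 1 < p) (hpq : 1 / p + 1 / q = 1)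
    (f : 𝕏 → ℝ) (hfmeas : Measurable f) (hf0 : ∫ x, f x ∂π = 0)
    (hfLpφ : Integrable (fun x => |f x| ^ p / φ x ^ (p / q)) π)
    (t : ℝ) (ht : 0 ≤ t) :
    ∫ x, |∫ y, f y ∂(P t x)| ^ p / φ x ^ (p / q) ∂π
      ≤ 2 ^ p * Cφ ^ (p / q) * Real.exp (-(β * p / q) * t) *
        ∫ x, |f x| ^ p / φ x ^ (p / q) ∂π := by
  classical
  -- exponent bookkeeping
  have hp0 : (0 : ℝ) < p := lt_trans one_pos hp
  have hpq' : p.HolderConjugate q := Real.holderConjugate_iff.mpr ⟨hp, by rw [← one_div, ← one_div]; exact hpq⟩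
  have hq0 : (0 : ℝ) < q := hpq'.symm.pos
  have hpq0 : (0 : ℝ) < p / q := div_pos hp0 hq0
  -- basic positivity of φ
  have hφpos : ∀ y, (0 : ℝ) < φ y := fun y => lt_of_lt_of_le one_pos (hφ1 y)
  -- the weight K
  set K : ℝ := Cφ * Real.exp (-β * t) with hK
  have hK0 : 0 < K := mul_pos hCφ (Real.exp_pos _)
  -- real and ENNReal versions of the Lp φ-integrands
  set g : 𝕏 → ℝ := fun y => |f y| ^ p / φ y ^ (p / q) with hgdef
  have hg0 : ∀ y, 0 ≤ g y := fun y =>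
    div_nonneg (Real.rpow_nonneg (abs_nonneg _) _) (Real.rpow_nonneg (hφpos y).le _)
  set gE : 𝕏 → ℝ≥0∞ :=
    fun y => ENNReal.ofReal |f y| ^ p * (ENNReal.ofReal (φ y) ^ (p / q))⁻¹ with hgEdef
  have hgE_eq : ∀ y, gE y = ENNReal.ofReal (g y) := by
    intro y
    rw [hgEdef, hgdef]
    simp only []
    rw [ENNReal.ofReal_div_of_pos (Real.rpow_pos_of_pos (hφpos y) _),
      ENNReal.ofReal_rpow_of_nonneg (abs_nonneg _) hp0.le,
      ENNReal.ofReal_rpow_of_nonneg (hφpos y).le hpq0.le]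
    exact (div_eq_mul_inv _ _).symm
  have hgEmeas : Measurable gE := by
    apply Measurable.mul
    · exact (hfmeas.abs.ennreal_ofReal).pow_const _
    · exact ((hφmeas.ennreal_ofReal).pow_const _).inv
  set φE : 𝕏 → ℝ≥0∞ := fun y => ENNReal.ofReal (φ y) with hφEdef
  have hφEmeas : Measurable φE := hφmeas.ennreal_ofReal
  -- ENNReal integrals
  set M : ℝ≥0∞ := ∫⁻ y, gE y ∂π with hMdef
  have hM : M = ENNReal.ofReal (∫ y, g y ∂π) := by
    rw [MeasureTheory.ofReal_integral_eq_lintegral_ofReal hfLpφ (ae_of_all _ hg0)]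
    exact lintegral_congr fun y => (hgE_eq y)
  have hMtop : M ≠ ∞ := by rw [hM]; exact ENNReal.ofReal_ne_top
  set F : 𝕏 → ℝ≥0∞ := fun x => ∫⁻ y, gE y ∂(P t x) with hFdef
  set Fφ : 𝕏 → ℝ≥0∞ := fun x => ∫⁻ y, φE y ∂(P t x) with hFφdef
  have hinv' : ∀ A : Set 𝕏, MeasurableSet A → ∫⁻ x, P t x A ∂π = π A := hinv t ht
  -- φE is integrable, so Fφ is a.e. finite thanks to a majorant
  have hφEint : ∫⁻ y, φE y ∂π ≠ ∞ := by
    rw [← MeasureTheory.ofReal_integral_eq_lintegral_ofReal hφint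
      (ae_of_all _ fun y => (hφpos y).le)]
    exact ENNReal.ofReal_ne_top
  obtain ⟨Φφ, hΦφmeas, hΦφmaj, hΦφint⟩ :=
    aux_majorant (P t) π hinv' hφEmeas (fun y => ENNReal.ofReal_lt_top) one_pos
  have hFφae : ∀ᵐ x ∂π, Fφ x ≠ ∞ := by
    have h1 : ∫⁻ x, Φφ x ∂π ≠ ∞ := by
      refine ne_top_of_le_ne_top ?_ hΦφint
      exact ENNReal.add_ne_top.mpr ⟨hφEint, ENNReal.one_ne_top⟩
    filter_upwards [ae_lt_top hΦφmeas h1] with x hx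
    exact ne_top_of_le_ne_top hx.ne (hΦφmaj x)
  -- the constant
  set c0 : ℝ≥0∞ := (2 : ℝ≥0∞) ^ (p - 1) * ENNReal.ofReal K ^ (p / q) with hc0def
  have hc0top : c0 ≠ ∞ := by
    apply ENNReal.mul_ne_top
    · exact ENNReal.rpow_ne_top_of_nonneg (by linarith) ENNReal.ofNat_ne_top
    · exact ENNReal.rpow_ne_top_of_nonneg hpq0.le ENNReal.ofReal_ne_top
  have hc00 : c0 ≠ 0 := by
    apply mul_ne_zero
    · exact (ENNReal.rpow_pos two_pos ENNReal.ofNat_ne_top).ne'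
    · exact (ENNReal.rpow_pos (ENNReal.ofReal_pos.mpr hK0) ENNReal.ofReal_ne_top).ne'
  have hpq1 : p / q = p - 1 := by
    have hq : q + p = p * q := by
      field_simp at hpq
      linarith [hpq]
    rw [div_eq_iff hq0.ne']
    nlinarith
  -- f is integrable w.r.t. π
  have hfπ : Integrable f π := by
    refine Integrable.mono (hfLpφ.add hφint) hfmeas.aestronglyMeasurable
      (ae_of_all _ fun y => ?_)
    rw [Real.norm_eq_abs, Real.norm_eq_abs]
    simp only [Pi.add_apply]
    have hgφ : 0 ≤ g y + φ y := add_nonneg (hg0 y) (hφpos y).le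
    rw [abs_of_nonneg hgφ]
    rcases le_total (|f y|) (φ y) with h | h
    · exact h.trans (le_add_of_nonneg_left (hg0 y))
    · have h1 : |f y| ≤ g y := by
        have h2 : φ y ^ (p / q) ≤ |f y| ^ (p / q) :=
          Real.rpow_le_rpow (hφpos y).le h hpq0.le
        have h3 : |f y| ^ p / |f y| ^ (p / q) ≤ g y :=
          div_le_div_of_nonneg_left (Real.rpow_nonneg (abs_nonneg _) _)
            (Real.rpow_pos_of_pos (hφpos y) _) h2
        have hfy0 : 0 < |f y| := lt_of_lt_of_le (hφpos y) h
        have h4 : |f y| ^ p / |f y| ^ (p / q) = |f y| := by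
          rw [← Real.rpow_sub hfy0, hpq1, sub_sub_cancel, Real.rpow_one]
        rw [← h4]
        exact h3
      exact h1.trans (le_add_of_nonneg_right (hφpos y).le)
  have hpoint : ∀ x, Fφ x ≠ ∞ →
      ENNReal.ofReal (|∫ y, f y ∂(P t x)| ^ p / φ x ^ (p / q)) ≤ c0 * (F x + M) := by
    intro x hx
    set μ := Z x t with hμdef
    have hμfst : μ.map Prod.fst = P t x := hZ1 x t ht
    have hμsnd : μ.map Prod.snd = π := hZ2 x t ht
    by_cases hfi : Integrable f (P t x)
    swap
    · rw [integral_undef hfi]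
      simp only [abs_zero]
      rw [Real.zero_rpow hp0.ne', zero_div, ENNReal.ofReal_zero]
      exact zero_le
    -- integrability of the coordinates
    have hf1i : Integrable (fun z : 𝕏 × 𝕏 => f z.1) μ := by
      have h := (integrable_map_measure hfmeas.aestronglyMeasurable
        measurable_fst.aemeasurable (μ := μ)).mp (by rwa [hμfst])
      exact h
    have hf2i : Integrable (fun z : 𝕏 × 𝕏 => f z.2) μ := by
      have h := (integrable_map_measure hfmeas.aestronglyMeasurable
        measurable_snd.aemeasurable (μ := μ)).mp (by rwa [hμsnd])
      exact h
    -- the mean-zero representation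
    have hT : ∫ y, f y ∂(P t x) = ∫ z, (f z.1 - f z.2) ∂μ := by
      rw [integral_sub hf1i hf2i]
      have e1 : ∫ z, f z.1 ∂μ = ∫ y, f y ∂(P t x) := by
        rw [← hμfst, integral_map measurable_fst.aemeasurable hfmeas.aestronglyMeasurable]
      have e2 : ∫ z, f z.2 ∂μ = 0 := by
        have h := integral_map (μ := μ) measurable_snd.aemeasurable
          (hfmeas.aestronglyMeasurable (μ := μ.map Prod.snd))
        rw [hμsnd] at h
        rw [← h]
        exact hf0
      rw [e1, e2, sub_zero]
    -- the off-diagonal set where f differs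
    set S : Set (𝕏 × 𝕏) := {z | f z.1 ≠ f z.2} with hSdef
    have hSmeas : MeasurableSet S := by
      have : MeasurableSet {z : 𝕏 × 𝕏 | f z.1 = f z.2} :=
        measurableSet_eq_fun (hfmeas.comp measurable_fst) (hfmeas.comp measurable_snd)
      exact this.compl
    set D : Set (𝕏 × 𝕏) := {z | z.1 ≠ z.2} with hDdef
    have hSsub : S ⊆ D := fun z hz heq => hz (by rw [heq])
    set u : 𝕏 × 𝕏 → ℝ≥0∞ := fun z => ENNReal.ofReal |f z.1| + ENNReal.ofReal |f z.2| with hudef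
    set v : 𝕏 × 𝕏 → ℝ≥0∞ := fun z => ENNReal.ofReal (φ z.1) + ENNReal.ofReal (φ z.2) with hvdef
    have humeas : Measurable u :=
      ((hfmeas.comp measurable_fst).abs.ennreal_ofReal).add
        ((hfmeas.comp measurable_snd).abs.ennreal_ofReal)
    have hvmeas : Measurable v :=
      ((hφmeas.comp measurable_fst).ennreal_ofReal).add
        ((hφmeas.comp measurable_snd).ennreal_ofReal)
    have hv0 : ∀ z, v z ≠ 0 := fun z =>
      (lt_of_lt_of_le (ENNReal.ofReal_pos.mpr (hφpos z.1)) le_self_add).ne'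
    have hvtop : ∀ z, v z ≠ ∞ :=
      fun z => ENNReal.add_ne_top.mpr ⟨ENNReal.ofReal_ne_top, ENNReal.ofReal_ne_top⟩
    set V : 𝕏 × 𝕏 → ℝ≥0∞ := fun z => v z ^ (1 / q) with hVdef
    have hVmeas : Measurable V := hvmeas.pow_const _
    have hV0 : ∀ z, V z ≠ 0 := fun z =>
      (ENNReal.rpow_pos (pos_iff_ne_zero.mpr (hv0 z)) (hvtop z)).ne'
    have hVtop : ∀ z, V z ≠ ∞ :=
      fun z => ENNReal.rpow_ne_top_of_nonneg (by positivity) (hvtop z)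
    set W : 𝕏 × 𝕏 → ℝ≥0∞ := fun z => u z * (V z)⁻¹ with hWdef
    have hWmeas : Measurable W := humeas.mul hVmeas.inv
    have huWV : ∀ z, W z * V z = u z := fun z => by
      rw [hWdef]
      simp only []
      rw [mul_assoc, ENNReal.inv_mul_cancel (hV0 z) (hVtop z), mul_one]
    -- step 1 : reduce to the off-diagonal lintegral
    have hstep1 : ENNReal.ofReal |∫ y, f y ∂(P t x)| ≤ ∫⁻ z in S, u z ∂μ := by
      rw [hT]
      have habs : |∫ z, (f z.1 - f z.2) ∂μ| ≤ ∫ z, |f z.1 - f z.2| ∂μ := by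
        have := norm_integral_le_integral_norm (μ := μ) (f := fun z : 𝕏 × 𝕏 => f z.1 - f z.2)
        simpa [Real.norm_eq_abs] using this
      calc ENNReal.ofReal |∫ z, (f z.1 - f z.2) ∂μ|
          ≤ ENNReal.ofReal (∫ z, |f z.1 - f z.2| ∂μ) := ENNReal.ofReal_le_ofReal habs
      _ = ∫⁻ z, ENNReal.ofReal |f z.1 - f z.2| ∂μ :=
          ofReal_integral_eq_lintegral_ofReal (hf1i.sub hf2i).abs
            (ae_of_all _ fun z => abs_nonneg _)
      _ = ∫⁻ z in S, ENNReal.ofReal |f z.1 - f z.2| ∂μ := by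
          rw [← lintegral_indicator hSmeas]
          refine lintegral_congr fun z => ?_
          by_cases hz : z ∈ S
          · rw [Set.indicator_of_mem hz]
          · rw [Set.indicator_of_notMem hz]
            have hzz : f z.1 = f z.2 := not_not.mp hz
            simp [hzz]
      _ ≤ ∫⁻ z in S, u z ∂μ := by
          refine lintegral_mono fun z => ?_
          rw [hudef]
          simp only []
          rw [← ENNReal.ofReal_add (abs_nonneg _) (abs_nonneg _)]
          refine ENNReal.ofReal_le_ofReal ?_
          rw [sub_eq_add_neg]
          exact (abs_add_le _ _).trans (by rw [abs_neg])
    -- Hölder's inequality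
    have hHolder : ∫⁻ z in S, u z ∂μ ≤
        (∫⁻ z in S, W z ^ p ∂μ) ^ (1 / p) * (∫⁻ z in S, V z ^ q ∂μ) ^ (1 / q) := by
      have h := ENNReal.lintegral_mul_le_Lp_mul_Lq (μ.restrict S) hpq'
        hWmeas.aemeasurable hVmeas.aemeasurable
      refine le_trans (le_of_eq (lintegral_congr fun z => ?_)) h
      simp only [Pi.mul_apply]
      exact (huWV z).symm
    -- the second factor : the coupling bound
    have hint : Integrable (fun z : 𝕏 × 𝕏 => φ z.1 + φ z.2) (μ.restrict D) := by
      constructor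
      · exact ((hφmeas.comp measurable_fst).add (hφmeas.comp measurable_snd)).aestronglyMeasurable
      · rw [hasFiniteIntegral_def]
        have hb : ∫⁻ z in D, (‖φ z.1 + φ z.2‖₊ : ℝ≥0∞) ∂μ
            ≤ Fφ x + ∫⁻ y, φE y ∂π := by
          calc ∫⁻ z in D, (‖φ z.1 + φ z.2‖₊ : ℝ≥0∞) ∂μ
              = ∫⁻ z in D, (φE z.1 + φE z.2) ∂μ := by
                refine lintegral_congr fun z => ?_
                rw [← enorm_eq_nnnorm, ← ofReal_norm, Real.norm_eq_abs,
                  abs_of_nonneg (add_nonneg (hφpos _).le (hφpos _).le),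
                  ENNReal.ofReal_add (hφpos _).le (hφpos _).le]
          _ ≤ ∫⁻ z, (φE z.1 + φE z.2) ∂μ := lintegral_mono' Measure.restrict_le_self le_rfl
          _ = (∫⁻ z, φE z.1 ∂μ) + ∫⁻ z, φE z.2 ∂μ :=
              lintegral_add_left (hφEmeas.comp measurable_fst) _
          _ = Fφ x + ∫⁻ y, φE y ∂π := by
              simp only [hFφdef]
              rw [← hμfst, ← hμsnd, lintegral_map hφEmeas measurable_fst,
                lintegral_map hφEmeas measurable_snd]
        exact lt_of_le_of_lt hb (lt_top_iff_ne_top.mpr (ENNReal.add_ne_top.mpr ⟨hx, hφEint⟩))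
    have hB : ∫⁻ z in S, V z ^ q ∂μ ≤ ENNReal.ofReal (K * φ x) := by
      have hBv : ∫⁻ z in S, V z ^ q ∂μ = ∫⁻ z in S, v z ∂μ := by
        refine lintegral_congr fun z => ?_
        rw [hVdef]
        simp only []
        rw [← ENNReal.rpow_mul, one_div, inv_mul_cancel₀ hq0.ne', ENNReal.rpow_one]
      rw [hBv]
      calc ∫⁻ z in S, v z ∂μ ≤ ∫⁻ z in D, v z ∂μ :=
          lintegral_mono' (Measure.restrict_mono hSsub le_rfl) le_rfl
      _ = ENNReal.ofReal (∫ z in D, (φ z.1 + φ z.2) ∂μ) := by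
          rw [ofReal_integral_eq_lintegral_ofReal hint
            (ae_of_all _ fun z => add_nonneg (hφpos _).le (hφpos _).le)]
          refine lintegral_congr fun z => ?_
          rw [ENNReal.ofReal_add (hφpos _).le (hφpos _).le]
      _ ≤ ENNReal.ofReal (K * φ x) := ENNReal.ofReal_le_ofReal (hZcoupling x t ht)
    -- the first factor : the weighted Lp bound
    have hA : ∫⁻ z in S, W z ^ p ∂μ ≤ (2 : ℝ≥0∞) ^ (p - 1) * (F x + M) := by
      have hptw : ∀ z, W z ^ p ≤ (2 : ℝ≥0∞) ^ (p - 1) * (gE z.1 + gE z.2) := by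
        intro z
        have h1 : W z ^ p = u z ^ p * (v z ^ (p / q))⁻¹ := by
          rw [hWdef]
          simp only []
          rw [ENNReal.mul_rpow_of_nonneg _ _ hp0.le, ENNReal.inv_rpow, hVdef]
          simp only []
          rw [← ENNReal.rpow_mul]
          congr 2
          ring
        have h2 : u z ^ p ≤ (2 : ℝ≥0∞) ^ (p - 1) *
            (ENNReal.ofReal |f z.1| ^ p + ENNReal.ofReal |f z.2| ^ p) :=
          ENNReal.rpow_add_le_mul_rpow_add_rpow _ _ hp.le
        have hinv1 : (v z ^ (p / q))⁻¹ ≤ ((ENNReal.ofReal (φ z.1)) ^ (p / q))⁻¹ := by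
          refine ENNReal.inv_le_inv.mpr ?_
          exact ENNReal.rpow_le_rpow le_self_add hpq0.le
        have hinv2 : (v z ^ (p / q))⁻¹ ≤ ((ENNReal.ofReal (φ z.2)) ^ (p / q))⁻¹ := by
          refine ENNReal.inv_le_inv.mpr ?_
          exact ENNReal.rpow_le_rpow le_add_self hpq0.le
        calc W z ^ p = u z ^ p * (v z ^ (p / q))⁻¹ := h1
        _ ≤ ((2 : ℝ≥0∞) ^ (p - 1) *
            (ENNReal.ofReal |f z.1| ^ p + ENNReal.ofReal |f z.2| ^ p)) * (v z ^ (p / q))⁻¹ :=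
            mul_le_mul_left h2 _
        _ = (2 : ℝ≥0∞) ^ (p - 1) *
            (ENNReal.ofReal |f z.1| ^ p * (v z ^ (p / q))⁻¹ +
             ENNReal.ofReal |f z.2| ^ p * (v z ^ (p / q))⁻¹) := by ring
        _ ≤ (2 : ℝ≥0∞) ^ (p - 1) * (gE z.1 + gE z.2) := by
            refine mul_le_mul_right (add_le_add ?_ ?_) _
            · exact mul_le_mul_right hinv1 _
            · exact mul_le_mul_right hinv2 _
      calc ∫⁻ z in S, W z ^ p ∂μ
          ≤ ∫⁻ z in S, (2 : ℝ≥0∞) ^ (p - 1) * (gE z.1 + gE z.2) ∂μ :=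
          lintegral_mono fun z => hptw z
      _ ≤ ∫⁻ z, (2 : ℝ≥0∞) ^ (p - 1) * (gE z.1 + gE z.2) ∂μ :=
          lintegral_mono' Measure.restrict_le_self le_rfl
      _ = (2 : ℝ≥0∞) ^ (p - 1) * ((∫⁻ z, gE z.1 ∂μ) + ∫⁻ z, gE z.2 ∂μ) := by
          rw [lintegral_const_mul _ (show Measurable fun z : 𝕏 × 𝕏 => gE z.1 + gE z.2 from
            (hgEmeas.comp measurable_fst).add (hgEmeas.comp measurable_snd)),
            lintegral_add_left (show Measurable fun z : 𝕏 × 𝕏 => gE z.1 from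
              hgEmeas.comp measurable_fst)]
      _ = (2 : ℝ≥0∞) ^ (p - 1) * (F x + M) := by
          simp only [hFdef, hMdef]
          rw [← hμfst, ← hμsnd, lintegral_map hgEmeas measurable_fst,
            lintegral_map hgEmeas measurable_snd]
    -- put everything together
    set T : ℝ := ∫ y, f y ∂(P t x) with hTdef
    have hcomb : ENNReal.ofReal |T| ≤
        ((2 : ℝ≥0∞) ^ (p - 1) * (F x + M)) ^ (1 / p) * (ENNReal.ofReal (K * φ x)) ^ (1 / q) :=
      (hstep1.trans hHolder).trans
        (mul_le_mul' (ENNReal.rpow_le_rpow hA (by positivity))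
          (ENNReal.rpow_le_rpow hB (by positivity)))
    have hTp : ENNReal.ofReal (|T| ^ p) ≤
        (2 : ℝ≥0∞) ^ (p - 1) * (F x + M) * (ENNReal.ofReal (K * φ x)) ^ (p / q) := by
      rw [← ENNReal.ofReal_rpow_of_nonneg (abs_nonneg _) hp0.le]
      calc (ENNReal.ofReal |T|) ^ p
          ≤ (((2 : ℝ≥0∞) ^ (p - 1) * (F x + M)) ^ (1 / p) *
            (ENNReal.ofReal (K * φ x)) ^ (1 / q)) ^ p := ENNReal.rpow_le_rpow hcomb hp0.le
      _ = (2 : ℝ≥0∞) ^ (p - 1) * (F x + M) * (ENNReal.ofReal (K * φ x)) ^ (p / q) := by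
          rw [ENNReal.mul_rpow_of_nonneg _ _ hp0.le, ← ENNReal.rpow_mul, ← ENNReal.rpow_mul]
          have hpp : 1 / p * p = 1 := by field_simp
          have hqp : 1 / q * p = p / q := by ring
          rw [hpp, hqp, ENNReal.rpow_one]
    have hLHS : ENNReal.ofReal (|T| ^ p / φ x ^ (p / q)) =
        ENNReal.ofReal (|T| ^ p) * ((ENNReal.ofReal (φ x)) ^ (p / q))⁻¹ := by
      rw [ENNReal.ofReal_div_of_pos (Real.rpow_pos_of_pos (hφpos x) _),
        ENNReal.ofReal_rpow_of_nonneg (hφpos x).le hpq0.le]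
      exact div_eq_mul_inv _ _
    rw [hLHS]
    have hKφ : (ENNReal.ofReal (K * φ x)) ^ (p / q) =
        (ENNReal.ofReal K) ^ (p / q) * (ENNReal.ofReal (φ x)) ^ (p / q) := by
      rw [ENNReal.ofReal_mul hK0.le, ENNReal.mul_rpow_of_nonneg _ _ hpq0.le]
    calc ENNReal.ofReal (|T| ^ p) * ((ENNReal.ofReal (φ x)) ^ (p / q))⁻¹
        ≤ ((2 : ℝ≥0∞) ^ (p - 1) * (F x + M) * (ENNReal.ofReal (K * φ x)) ^ (p / q)) *
          ((ENNReal.ofReal (φ x)) ^ (p / q))⁻¹ := mul_le_mul_left hTp _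
    _ = c0 * (F x + M) *
        ((ENNReal.ofReal (φ x)) ^ (p / q) * ((ENNReal.ofReal (φ x)) ^ (p / q))⁻¹) := by
        rw [hKφ, hc0def]
        ring
    _ = c0 * (F x + M) := by
        rw [ENNReal.mul_inv_cancel
          (ENNReal.rpow_pos (ENNReal.ofReal_pos.mpr (hφpos x)) ENNReal.ofReal_ne_top).ne'
          (ENNReal.rpow_ne_top_of_nonneg hpq0.le ENNReal.ofReal_ne_top), mul_one]
  -- the global bound on the ENNReal level
  have hglobal : ∫⁻ x, ENNReal.ofReal (|∫ y, f y ∂(P t x)| ^ p / φ x ^ (p / q)) ∂π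
      ≤ c0 * (2 * M) := by
    refine ENNReal.le_of_forall_pos_le_add fun ε hε hfin => ?_
    obtain ⟨Φg, hΦgmeas, hΦgmaj, hΦgint⟩ :=
      aux_majorant (P t) π hinv' hgEmeas
        (fun y => by rw [hgE_eq y]; exact ENNReal.ofReal_lt_top)
        (show (0:ℝ≥0∞) < c0⁻¹ * ε by
          apply ENNReal.mul_pos (ENNReal.inv_ne_zero.mpr hc0top) (by exact_mod_cast hε.ne'))
    calc ∫⁻ x, ENNReal.ofReal (|∫ y, f y ∂(P t x)| ^ p / φ x ^ (p / q)) ∂π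
        ≤ ∫⁻ x, c0 * (F x + M) ∂π := by
          refine lintegral_mono_ae ?_
          filter_upwards [hFφae] with x hx using hpoint x hx
    _ ≤ ∫⁻ x, c0 * (Φg x + M) ∂π := by
          refine lintegral_mono fun x => ?_
          exact mul_le_mul_right (add_le_add_left (hΦgmaj x) M) c0
    _ = c0 * ((∫⁻ x, Φg x ∂π) + M) := by
          rw [lintegral_const_mul c0 (show Measurable fun x => Φg x + M from hΦgmeas.add measurable_const),
            lintegral_add_left hΦgmeas, lintegral_const, measure_univ, mul_one]
    _ ≤ c0 * ((M + c0⁻¹ * ε) + M) := by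
          exact mul_le_mul_right (add_le_add_left hΦgint M) c0
    _ = c0 * (2 * M) + c0 * (c0⁻¹ * ε) := by ring
    _ ≤ c0 * (2 * M) + ε := by
          refine add_le_add_right ?_ _
          rw [← mul_assoc, ENNReal.mul_inv_cancel hc00 hc0top, one_mul]
  -- back to real integrals
  have hRHS0 : (0:ℝ) ≤ 2 ^ p * Cφ ^ (p / q) * Real.exp (-(β * p / q) * t) := by positivity
  by_cases hInt : Integrable (fun x => |∫ y, f y ∂(P t x)| ^ p / φ x ^ (p / q)) π
  · rw [integral_eq_lintegral_of_nonneg_ae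
      (ae_of_all _ fun x => div_nonneg (Real.rpow_nonneg (abs_nonneg _) _)
        (Real.rpow_nonneg (hφpos x).le _)) hInt.aestronglyMeasurable]
    have hb : c0 * (2 * M) ≠ ∞ :=
      ENNReal.mul_ne_top hc0top (ENNReal.mul_ne_top (by norm_num) hMtop)
    have hKs : K ^ (p/q) = Cφ ^ (p/q) * Real.exp (-(β * p / q) * t) := by
      rw [hK, Real.mul_rpow hCφ.le (Real.exp_pos _).le, ← Real.exp_mul]
      congr 2
      ring
    have h2p : (2:ℝ) ^ (p-1) * 2 = 2 ^ p := by
      nth_rewrite 2 [← Real.rpow_one (2:ℝ)]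
      rw [← Real.rpow_add two_pos]
      norm_num
    have hc0eq : c0 * (2 * M) = ENNReal.ofReal
        (2 ^ p * Cφ ^ (p / q) * Real.exp (-(β * p / q) * t) * ∫ y, g y ∂π) := by
      rw [hM, hc0def]
      have h2 : ((2:ℝ≥0∞)) = ENNReal.ofReal (2:ℝ) := by simp
      rw [h2, ENNReal.ofReal_rpow_of_pos two_pos, ENNReal.ofReal_rpow_of_pos hK0,
        ← ENNReal.ofReal_mul (by positivity), ← ENNReal.ofReal_mul (by norm_num),
        ← ENNReal.ofReal_mul (by positivity)]
      congr 1
      have : (2:ℝ) ^ (p-1) * K^(p/q) * (2 * (∫ y, g y ∂π)) =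
          ((2:ℝ)^(p-1) * 2) * K^(p/q) * (∫ y, g y ∂π) := by ring
      rw [this, h2p, hKs]
      ring
    refine le_trans (ENNReal.toReal_mono hb hglobal) (le_of_eq ?_)
    rw [hc0eq, ENNReal.toReal_ofReal (mul_nonneg hRHS0 (integral_nonneg hg0))]
  · rw [integral_undef hInt]
    exact mul_nonneg hRHS0 (integral_nonneg hg0)
end

section
/- Let A be a nonnegative self-adjoint operator on a Hilbert space H with spectral measure P(dλ), and T_t = e^{-At}. Suppose D ⊂ H is a dense subspace such that for every f ∈ D there exists C(f) with ‖T_t f‖^2 ≤ C(f) e^{-βt} for all t ≥ 0. Then the spectral measure (P(dλ)f, f) is supported on [β, ∞) for every f ∈ H, and consequently ‖T_t f‖ ≤ e^{-βt/2}‖f‖ for all f ∈ H and t ≥ 0. -/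
open MeasureTheory Set

/-- If `A ≥ 0` is self-adjoint with spectral measure `P(dλ)` (here encoded through the scalar
spectral measures `ν f = (P(dλ)f,f)`), `T_t = e^{-At}`, and on a dense subspace `D` one has
`‖T_t f‖² ≤ C(f) e^{-βt}`, then every scalar spectral measure is supported on `[β,∞)` and
`‖T_t f‖ ≤ e^{-βt/2}‖f‖` for all `f ∈ H`. -/
theorem spectral_support_of_dense_decay
    {H : Type*} [NormedAddCommGroup H] [InnerProductSpace ℂ H] [CompleteSpace H]
    (T : ℝ → H →L[ℂ] H)
    (ν : H → Measure ℝ) (hνfin : ∀ f, IsFiniteMeasure (ν f))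
    -- ν f = (P(dλ)f,f) : total mass ‖f‖², supported on [0,∞)
    (hνtot : ∀ f : H, (ν f) univ = ENNReal.ofReal (‖f‖ ^ 2))
    (hνpos : ∀ f : H, (ν f) (Iio (0 : ℝ)) = 0)
    -- ‖T_t f‖² = ∫ e^{-λt} (P(dλ)f,f)
    (hT : ∀ (t : ℝ), 0 ≤ t → ∀ f : H,
      ‖T t f‖ ^ 2 = ∫ lam, Real.exp (-lam * t) ∂(ν f))
    -- (P(Δ)fₙ,fₙ) → (P(Δ)f,f) when fₙ → f (continuity of the quadratic form of `P(Δ)`)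
    (hνcont : ∀ s : Set ℝ, MeasurableSet s → Continuous (fun f : H => ((ν f) s).toReal))
    (β : ℝ) (hβ : 0 < β)
    (D : Set H) (hdense : Dense D)
    (hdecay : ∀ f ∈ D, ∃ C : ℝ, ∀ t : ℝ, 0 ≤ t → ‖T t f‖ ^ 2 ≤ C * Real.exp (-β * t)) :
    (∀ f : H, (ν f) (Iio β) = 0) ∧
      (∀ f : H, ∀ t : ℝ, 0 ≤ t → ‖T t f‖ ≤ Real.exp (-β * t / 2) * ‖f‖) := by
  have hae : ∀ f : H, ∀ᵐ lam ∂(ν f), (0:ℝ) ≤ lam := by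
    intro f
    rw [ae_iff]
    convert hνpos f using 2
    ext x; simp [not_le, mem_Iio]
  have hint : ∀ (f : H) (t : ℝ), 0 ≤ t →
      Integrable (fun lam => Real.exp (-lam * t)) (ν f) := by
    intro f t ht
    haveI := hνfin f
    refine Integrable.mono' (integrable_const 1) ?_ ?_
    · exact (Real.continuous_exp.comp (by continuity)).aestronglyMeasurable
    · filter_upwards [hae f] with lam hlam
      rw [Real.norm_eq_abs, abs_of_pos (Real.exp_pos _)]
      have : -lam * t ≤ 0 := by nlinarith
      calc Real.exp (-lam * t) ≤ Real.exp 0 := Real.exp_le_exp.2 this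
        _ = 1 := Real.exp_zero
  have hD : ∀ f ∈ D, (ν f) (Iio β) = 0 := by
    intro f hf
    haveI := hνfin f
    obtain ⟨C, hC⟩ := hdecay f hf
    by_contra h
    have hcov : Iio β = ⋃ n : ℕ, Iio (β - β / (n+1)) := by
      ext x
      simp only [mem_Iio, mem_iUnion]
      constructor
      · intro hx
        obtain ⟨n, hn⟩ := exists_nat_gt (β / (β - x))
        refine ⟨n, ?_⟩
        have hβx : 0 < β - x := by linarith
        rw [div_lt_iff₀ hβx] at hn
        have hpos : (0:ℝ) < (n:ℝ) + 1 := by positivity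
        have : β / ((n:ℝ)+1) < β - x := by
          rw [div_lt_iff₀ hpos]
          nlinarith
        linarith
      · rintro ⟨n, hn⟩
        have : 0 ≤ β / ((n:ℝ)+1) := by positivity
        linarith
    obtain ⟨n, hb⟩ : ∃ n : ℕ, (ν f) (Iio (β - β/((n:ℝ)+1))) ≠ 0 := by
      by_contra hall
      push_neg at hall
      rw [hcov] at h
      exact h (measure_iUnion_null hall)
    set b := β - β/((n:ℝ)+1) with hbdef
    have hbβ : b < β := by
      have : 0 < β / ((n:ℝ)+1) := by positivity
      simp only [hbdef]; linarith
    set c := ((ν f) (Iio b)).toReal with hcdef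
    have hc : 0 < c := ENNReal.toReal_pos hb (measure_lt_top _ _).ne
    have key : ∀ t : ℝ, 0 ≤ t → c ≤ C * Real.exp ((b - β) * t) := by
      intro t ht
      have h1 : Real.exp (-b*t) * c ≤ ∫ lam in Iio b, Real.exp (-lam*t) ∂(ν f) := by
        have := setIntegral_mono_on (integrable_const (Real.exp (-b*t))).integrableOn
          ((hint f t ht).integrableOn) measurableSet_Iio
          (fun x hx => by
            apply Real.exp_le_exp.2
            have hx' : x < b := hx
            nlinarith)
        rw [setIntegral_const] at this
        calc Real.exp (-b*t) * c = ((ν f) (Iio b)).toReal • Real.exp (-b*t) := by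
              rw [smul_eq_mul]; ring
          _ ≤ _ := this
      have h2 : ∫ lam in Iio b, Real.exp (-lam*t) ∂(ν f)
          ≤ ∫ lam, Real.exp (-lam*t) ∂(ν f) :=
        setIntegral_le_integral (hint f t ht)
          (Filter.Eventually.of_forall fun x => (Real.exp_pos _).le)
      have h3 : Real.exp (-b*t) * c ≤ C * Real.exp (-β*t) := by
        calc Real.exp (-b*t) * c ≤ _ := h1
          _ ≤ _ := h2
          _ = ‖T t f‖^2 := (hT t ht f).symm
          _ ≤ _ := hC t ht
      have hexp : C * Real.exp (-β*t) = C * Real.exp ((b-β)*t) * Real.exp (-b*t) := by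
        rw [mul_assoc, ← Real.exp_add]; ring_nf
      rw [hexp, mul_comm (Real.exp (-b*t)) c] at h3
      exact le_of_mul_le_mul_right h3 (Real.exp_pos _)
    have hlim : Filter.Tendsto (fun t => C * Real.exp ((b - β) * t))
        Filter.atTop (nhds 0) := by
      have h1 : Filter.Tendsto (fun t : ℝ => (b - β) * t) Filter.atTop Filter.atBot := by
        have hneg : b - β < 0 := by linarith
        exact Filter.Tendsto.const_mul_atTop_of_neg hneg Filter.tendsto_id
      have h2 : Filter.Tendsto (fun t => Real.exp ((b - β) * t)) Filter.atTop (nhds 0) :=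
        Real.tendsto_exp_atBot.comp h1
      simpa using h2.const_mul C
    have hev : ∀ᶠ t in Filter.atTop, C * Real.exp ((b - β) * t) < c :=
      hlim.eventually_lt_const hc
    obtain ⟨t, htlt, ht0⟩ := (hev.and (Filter.eventually_ge_atTop (0:ℝ))).exists
    exact absurd (key t ht0) (not_le.2 htlt)
  have hall : ∀ f : H, (ν f) (Iio β) = 0 := by
    have hclosed : IsClosed {f : H | (ν f) (Iio β) = 0} := by
      have hset : {f : H | (ν f) (Iio β) = 0}
          = (fun f => ((ν f) (Iio β)).toReal) ⁻¹' {0} := by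
        ext f
        haveI := hνfin f
        simp [ENNReal.toReal_eq_zero_iff, (measure_lt_top (ν f) (Iio β)).ne]
      rw [hset]
      exact IsClosed.preimage (hνcont _ measurableSet_Iio) isClosed_singleton
    intro f
    have hsub : closure D ⊆ {f : H | (ν f) (Iio β) = 0} :=
      hclosed.closure_subset_iff.2 (fun g hg => hD g hg)
    exact hsub (hdense f)
  refine ⟨hall, fun f t ht => ?_⟩
  haveI := hνfin f
  have hae' : ∀ᵐ lam ∂(ν f), β ≤ lam := by
    rw [ae_iff]
    convert hall f using 2
    ext x; simp [not_le, mem_Iio]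
  have h1 : ‖T t f‖^2 ≤ Real.exp (-β*t) * ‖f‖^2 := by
    rw [hT t ht f]
    have hmono : ∫ lam, Real.exp (-lam*t) ∂(ν f)
        ≤ ∫ _lam, Real.exp (-β*t) ∂(ν f) := by
      apply integral_mono_ae (hint f t ht) (integrable_const _)
      filter_upwards [hae'] with lam hlam
      exact Real.exp_le_exp.2 (by nlinarith)
    rw [integral_const] at hmono
    calc _ ≤ _ := hmono
      _ = Real.exp (-β*t) * ‖f‖^2 := by
        rw [measureReal_def, hνtot f, ENNReal.toReal_ofReal (by positivity), smul_eq_mul]; ring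
  have h2 : (Real.exp (-β*t/2))^2 = Real.exp (-β*t) := by
    rw [sq, ← Real.exp_add]; ring_nf
  have h3 : ‖T t f‖^2 ≤ (Real.exp (-β*t/2) * ‖f‖)^2 := by
    rw [mul_pow, h2]; exact h1
  calc ‖T t f‖ = Real.sqrt (‖T t f‖^2) := (Real.sqrt_sq (norm_nonneg _)).symm
    _ ≤ Real.sqrt ((Real.exp (-β*t/2) * ‖f‖)^2) := Real.sqrt_le_sqrt h3
    _ = Real.exp (-β*t/2) * ‖f‖ := Real.sqrt_sq (by positivity)
end

section
/- Let π be a probability measure on 𝕏, K ⊂ 𝕏 with π(K) > 0, and h ∈ L₂(π) with h = 0 on K. Then ∫ h² dπ - (∫ h dπ)² ≥ π(K) ∫ h² dπ. -/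
open MeasureTheory Set

/-- If `h ∈ L₂(π)` vanishes on a set `K` with `π(K) > 0`, then
`∫ h² dπ - (∫ h dπ)² ≥ π(K) ∫ h² dπ`. -/
theorem variance_lower_bound_of_vanishing_on_set
    {𝕏 : Type*} [MeasurableSpace 𝕏] (π : Measure 𝕏) [IsProbabilityMeasure π]
    (K : Set 𝕏) (hK : MeasurableSet K) (hKpos : 0 < π K)
    (h : 𝕏 → ℝ) (hmem : MemLp h 2 π) (hzero : ∀ x ∈ K, h x = 0) :
    (π K).toReal * ∫ x, h x ^ 2 ∂π
      ≤ ∫ x, h x ^ 2 ∂π - (∫ x, h x ∂π) ^ 2 := by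
  have hKc : MeasurableSet Kᶜ := hK.compl
  have hgmem : MemLp (Kᶜ.indicator (fun _ => (1:ℝ))) 2 π :=
    memLp_indicator_const 2 hKc 1 (Or.inr (measure_ne_top π _))
  set f : Lp ℝ 2 π := hmem.toLp h with hfdef
  set g : Lp ℝ 2 π := hgmem.toLp _ with hgdef
  have hf : ∀ᵐ x ∂π, f x = h x := hmem.coeFn_toLp
  have hg : ∀ᵐ x ∂π, g x = Kᶜ.indicator (fun _ => (1:ℝ)) x := hgmem.coeFn_toLp
  have key : (inner ℝ g f : ℝ) * inner ℝ g f ≤ (inner ℝ g g : ℝ) * inner ℝ f f :=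
    real_inner_mul_inner_self_le g f
  have h1 : (inner ℝ g f : ℝ) = ∫ x, h x ∂π := by
    rw [L2.inner_def]
    refine integral_congr_ae ?_
    filter_upwards [hf, hg] with x hfx hgx
    simp only [RCLike.inner_apply, starRingEnd_apply, star_trivial, hfx, hgx]
    by_cases hx : x ∈ K
    · simp [Set.indicator_of_notMem (show x ∉ Kᶜ by simpa using hx), hzero x hx]
    · simp [Set.indicator_of_mem (show x ∈ Kᶜ from hx)]
  have h2 : (inner ℝ g g : ℝ) = (π Kᶜ).toReal := by
    rw [L2.inner_def]
    have : ∀ᵐ x ∂π, (inner ℝ (g x) (g x) : ℝ) =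
        Kᶜ.indicator (fun _ => (1:ℝ)) x := by
      filter_upwards [hg] with x hgx
      simp only [RCLike.inner_apply, starRingEnd_apply, star_trivial, hgx]
      by_cases hx : x ∈ Kᶜ <;> simp [hx]
    rw [integral_congr_ae this, integral_indicator_const _ hKc]
    simp [measureReal_def]
  have h3 : (inner ℝ f f : ℝ) = ∫ x, h x ^ 2 ∂π := by
    rw [L2.inner_def]
    refine integral_congr_ae ?_
    filter_upwards [hf] with x hfx
    simp [RCLike.inner_apply, starRingEnd_apply, hfx, sq]
  have hadd : (π K).toReal + (π Kᶜ).toReal = 1 := by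
    rw [← ENNReal.toReal_add (measure_ne_top π K) (measure_ne_top π Kᶜ),
      measure_add_measure_compl hK]
    simp
  have hI2 : 0 ≤ ∫ x, h x ^ 2 ∂π := integral_nonneg fun x => sq_nonneg _
  rw [h1, h2, h3] at key
  nlinarith [key, hadd, hI2]
end

section
/- Let Z = (Z¹, Z²) be a coupling where Z¹ has the law of a Markov process X started at x and Z² has the stationary law with invariant measure π. Then for every bounded measurable f (or f ∈ L₁(π)) with ∫ f dπ = 0: T_t f(x) = E[(f(Z¹_t) - f(Z²_t)) 1_{Z¹_t ≠ Z²_t}], and hence |T_t f(x) - ∫ f dπ| ≤ E[(|f(Z¹_t)| + |f(Z²_t)|) 1_{Z¹_t ≠ Z²_t}]. In particular, if X admits an exponential φ-coupling and |f| ≤ φ, then |T_t f(x) - ∫ f dπ| ≤ C_φ e^{-βt} φ(x); consequently X is exponentially φ-ergodic: ‖μ_t − π‖_{φ,var} ≤ C_φ e^{-βt} ∫ φ dμ for every initial distribution μ. -/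
open MeasureTheory Set

lemma repr_bound_aux {𝕏 : Type*} [MeasurableSpace 𝕏] (ν : Measure (𝕏 × 𝕏)) (Pm πm : Measure 𝕏)
    (h1 : ν.map Prod.fst = Pm) (h2 : ν.map Prod.snd = πm)
    (f : 𝕏 → ℝ) (hfP : Integrable f Pm) (hfπ : Integrable f πm) :
    (∫ y, f y ∂Pm) - (∫ y, f y ∂πm)
      = ∫ p in {p : 𝕏 × 𝕏 | p.1 ≠ p.2}, (f p.1 - f p.2) ∂ν ∧
    |(∫ y, f y ∂Pm) - ∫ y, f y ∂πm|
      ≤ ∫ p in {p : 𝕏 × 𝕏 | p.1 ≠ p.2}, (|f p.1| + |f p.2|) ∂ν := by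
  have hi1 : Integrable (fun p : 𝕏 × 𝕏 => f p.1) ν := by
    have := (integrable_map_measure (h1 ▸ hfP.aestronglyMeasurable)
      measurable_fst.aemeasurable).mp (h1 ▸ hfP)
    exact this
  have hi2 : Integrable (fun p : 𝕏 × 𝕏 => f p.2) ν := by
    have := (integrable_map_measure (h2 ▸ hfπ.aestronglyMeasurable)
      measurable_snd.aemeasurable).mp (h2 ▸ hfπ)
    exact this
  have e1 : (∫ y, f y ∂Pm) = ∫ p, f p.1 ∂ν := by
    rw [← h1, integral_map measurable_fst.aemeasurable (h1 ▸ hfP.aestronglyMeasurable)]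
  have e2 : (∫ y, f y ∂πm) = ∫ p, f p.2 ∂ν := by
    rw [← h2, integral_map measurable_snd.aemeasurable (h2 ▸ hfπ.aestronglyMeasurable)]
  have key : (∫ y, f y ∂Pm) - (∫ y, f y ∂πm)
      = ∫ p in {p : 𝕏 × 𝕏 | p.1 ≠ p.2}, (f p.1 - f p.2) ∂ν := by
    rw [e1, e2, ← integral_sub hi1 hi2,
      setIntegral_eq_integral_of_forall_compl_eq_zero]
    intro p hp
    simp only [mem_setOf_eq, not_not] at hp
    rw [hp, sub_self]
  refine ⟨key, ?_⟩
  rw [key]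
  calc |∫ p in {p : 𝕏 × 𝕏 | p.1 ≠ p.2}, (f p.1 - f p.2) ∂ν|
      ≤ ∫ p in {p : 𝕏 × 𝕏 | p.1 ≠ p.2}, |f p.1 - f p.2| ∂ν := by
        simpa [Real.norm_eq_abs] using
          norm_integral_le_integral_norm (μ := ν.restrict {p : 𝕏 × 𝕏 | p.1 ≠ p.2})
            (fun p : 𝕏 × 𝕏 => f p.1 - f p.2)
    _ ≤ ∫ p in {p : 𝕏 × 𝕏 | p.1 ≠ p.2}, (|f p.1| + |f p.2|) ∂ν := by
        refine integral_mono ((hi1.sub hi2).abs.restrict) ((hi1.abs.add hi2.abs).restrict) ?_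
        intro p
        exact abs_sub _ _

/-- Coupling representation of `T_t f` and exponential `φ`-ergodicity of a process admitting an
exponential `φ`-coupling. The `φ`-variation distance is expressed through test functions
`|f| ≤ φ`. -/
theorem coupling_representation_and_phi_ergodicity
    {𝕏 : Type*} [MeasurableSpace 𝕏]
    (P : ℝ → 𝕏 → Measure 𝕏) [∀ t x, IsProbabilityMeasure (P t x)]
    (π : Measure 𝕏) [IsProbabilityMeasure π]
    (hinv : ∀ t : ℝ, 0 ≤ t → ∀ A : Set 𝕏, MeasurableSet A →
      ∫⁻ x, P t x A ∂π = π A)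
    (hTmeas : ∀ g : 𝕏 → ℝ, Measurable g → ∀ t : ℝ,
      Measurable (fun x => ∫ y, g y ∂(P t x)))
    (φ : 𝕏 → ℝ) (hφmeas : Measurable φ) (hφ1 : ∀ x, 1 ≤ φ x)
    (hφint : Integrable φ π) (hφPint : ∀ x t, 0 ≤ t → Integrable φ (P t x))
    (Cφ β : ℝ) (hCφ : 0 < Cφ) (hβ : 0 < β)
    -- exponential φ-coupling
    (Z : 𝕏 → ℝ → Measure (𝕏 × 𝕏))
    (hZ1 : ∀ x t, 0 ≤ t → (Z x t).map Prod.fst = P t x)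
    (hZ2 : ∀ x t, 0 ≤ t → (Z x t).map Prod.snd = π)
    (hZcoupling : ∀ x t, 0 ≤ t →
      ∫ p in {p : 𝕏 × 𝕏 | p.1 ≠ p.2}, (φ p.1 + φ p.2) ∂(Z x t)
        ≤ Cφ * Real.exp (-β * t) * φ x) :
    -- (1),(2): representation and bound for bounded mean-zero f
    (∀ f : 𝕏 → ℝ, Measurable f → (∃ B, ∀ x, |f x| ≤ B) → (∫ x, f x ∂π) = 0 →
      ∀ t : ℝ, 0 ≤ t → ∀ x : 𝕏,
        (∫ y, f y ∂(P t x)) = ∫ p in {p : 𝕏 × 𝕏 | p.1 ≠ p.2}, (f p.1 - f p.2) ∂(Z x t) ∧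
        |∫ y, f y ∂(P t x)|
          ≤ ∫ p in {p : 𝕏 × 𝕏 | p.1 ≠ p.2}, (|f p.1| + |f p.2|) ∂(Z x t)) ∧
    -- (3): for |f| ≤ φ, |T_t f(x) − ∫ f dπ| ≤ C_φ e^{-βt} φ(x)
    (∀ f : 𝕏 → ℝ, Measurable f → (∀ x, |f x| ≤ φ x) →
      ∀ t : ℝ, 0 ≤ t → ∀ x : 𝕏,
        |(∫ y, f y ∂(P t x)) - ∫ y, f y ∂π| ≤ Cφ * Real.exp (-β * t) * φ x) ∧
    -- (4): exponential φ-ergodicity: ‖μ_t − π‖_{φ,var} ≤ C_φ e^{-βt} ∫ φ dμ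
    (∀ μ : Measure 𝕏, IsProbabilityMeasure μ → Integrable φ μ →
      ∀ f : 𝕏 → ℝ, Measurable f → (∀ x, |f x| ≤ φ x) →
      ∀ t : ℝ, 0 ≤ t →
        |(∫ x, (∫ y, f y ∂(P t x)) ∂μ) - ∫ y, f y ∂π|
          ≤ Cφ * Real.exp (-β * t) * ∫ x, φ x ∂μ) := by
  -- part (3) first, reused in (4)
  have part3 : ∀ f : 𝕏 → ℝ, Measurable f → (∀ x, |f x| ≤ φ x) →
      ∀ t : ℝ, 0 ≤ t → ∀ x : 𝕏,
        |(∫ y, f y ∂(P t x)) - ∫ y, f y ∂π| ≤ Cφ * Real.exp (-β * t) * φ x := by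
    intro f hf hfφ t ht x
    have hfP : Integrable f (P t x) :=
      (hφPint x t ht).mono' hf.aestronglyMeasurable
        (Filter.Eventually.of_forall fun y => by simpa [Real.norm_eq_abs] using hfφ y)
    have hfπ : Integrable f π :=
      hφint.mono' hf.aestronglyMeasurable
        (Filter.Eventually.of_forall fun y => by simpa [Real.norm_eq_abs] using hfφ y)
    obtain ⟨-, hb⟩ := repr_bound_aux (Z x t) (P t x) π (hZ1 x t ht) (hZ2 x t ht) f hfP hfπ
    refine hb.trans (le_trans ?_ (hZcoupling x t ht))
    have hφ1' : Integrable (fun p : 𝕏 × 𝕏 => φ p.1) (Z x t) := by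
      have h1 := hZ1 x t ht
      have := (integrable_map_measure (h1 ▸ (hφPint x t ht).aestronglyMeasurable)
        measurable_fst.aemeasurable).mp (h1 ▸ hφPint x t ht)
      exact this
    have hφ2' : Integrable (fun p : 𝕏 × 𝕏 => φ p.2) (Z x t) := by
      have h2 := hZ2 x t ht
      have := (integrable_map_measure (h2 ▸ hφint.aestronglyMeasurable)
        measurable_snd.aemeasurable).mp (h2 ▸ hφint)
      exact this
    have hif1 : Integrable (fun p : 𝕏 × 𝕏 => |f p.1|) (Z x t) :=
      hφ1'.mono' (hf.comp measurable_fst).abs.aestronglyMeasurable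
        (Filter.Eventually.of_forall fun p => by
          simpa [Real.norm_eq_abs, abs_abs] using hfφ p.1)
    have hif2 : Integrable (fun p : 𝕏 × 𝕏 => |f p.2|) (Z x t) :=
      hφ2'.mono' (hf.comp measurable_snd).abs.aestronglyMeasurable
        (Filter.Eventually.of_forall fun p => by
          simpa [Real.norm_eq_abs, abs_abs] using hfφ p.2)
    refine integral_mono ((hif1.add hif2).restrict) ((hφ1'.add hφ2').restrict) ?_
    intro p
    exact add_le_add (hfφ p.1) (hfφ p.2)
  refine ⟨?_, part3, ?_⟩
  · -- parts (1),(2)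
    intro f hf ⟨B, hB⟩ hmean t ht x
    have hfP : Integrable f (P t x) :=
      (integrable_const B).mono' hf.aestronglyMeasurable
        (Filter.Eventually.of_forall fun y => by simpa [Real.norm_eq_abs] using hB y)
    have hfπ : Integrable f π :=
      (integrable_const B).mono' hf.aestronglyMeasurable
        (Filter.Eventually.of_forall fun y => by simpa [Real.norm_eq_abs] using hB y)
    obtain ⟨he, hb⟩ := repr_bound_aux (Z x t) (P t x) π (hZ1 x t ht) (hZ2 x t ht) f hfP hfπ
    rw [hmean, sub_zero] at he hb
    exact ⟨he, hb⟩
  · -- part (4)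
    intro μ hμ hφμ f hf hfφ t ht
    set c := ∫ y, f y ∂π with hc
    set g : 𝕏 → ℝ := fun x => ∫ y, f y ∂(P t x) with hg
    have hgmeas : Measurable g := hTmeas f hf t
    have hbound : ∀ x, |g x - c| ≤ Cφ * Real.exp (-β * t) * φ x := fun x =>
      part3 f hf hfφ t ht x
    have hgint : Integrable g μ := by
      refine (((hφμ.const_mul (Cφ * Real.exp (-β * t))).add
        (integrable_const |c|)).mono' hgmeas.aestronglyMeasurable
        (Filter.Eventually.of_forall fun x => ?_))
      have : |g x| ≤ |g x - c| + |c| := by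
        calc |g x| = |(g x - c) + c| := by ring_nf
        _ ≤ |g x - c| + |c| := abs_add_le _ _
      simpa [Real.norm_eq_abs] using this.trans (add_le_add (hbound x) (le_refl _))
    have hsub : Integrable (fun x => g x - c) μ := hgint.sub (integrable_const c)
    have e : (∫ x, g x ∂μ) - c = ∫ x, (g x - c) ∂μ := by
      rw [integral_sub hgint (integrable_const c), integral_const]
      simp
    rw [e]
    calc |∫ x, (g x - c) ∂μ| ≤ ∫ x, |g x - c| ∂μ := by
          simpa [Real.norm_eq_abs] using
            norm_integral_le_integral_norm (μ := μ) (fun x => g x - c)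
      _ ≤ ∫ x, Cφ * Real.exp (-β * t) * φ x ∂μ :=
          integral_mono hsub.abs (hφμ.const_mul _) hbound
      _ = Cφ * Real.exp (-β * t) * ∫ x, φ x ∂μ := integral_const_mul _ _
end
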